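/- For the instance with n = 2k agents where x₁ = ... = x_{k-1} = x_k - b = x_{k+1} - 2b = ... = x_n - 2b, the optimal social cost equals n·c + b, while the expected social cost of the median-peaks mechanism (outputting x_k - b or x_k + b each with probability 1/2) equals n·c + (n-1)·b. Hence its ratio on this instance is (n·c + (n-1)·b)/(n·c + b), which tends to 1 + b/c as n → ∞. -/

import Mathlib

noncomputable def cost (b c y x : ℝ) : ℝ := c + min |x - b - y| |x + b - y|

lemma sum_eval (a b : ℝ) (k : ℕ) (hk : 1 ≤ k) (x : Fin (2*k) → ℝ)
    (hx : ∀ i : Fin (2*k), x i = if (i:ℕ) < k - 1 then a else if (i:ℕ) = k-1 then a + b else a + 2*b)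
    (f : ℝ → ℝ) :
    ∑ i, f (x i) = ((k:ℝ)-1) * f a + f (a+b) + (k:ℝ) * f (a+2*b) := by
  have h1 : ∀ i : Fin (2*k), f (x i) = if (i:ℕ) < k-1 then f a else if (i:ℕ) = k-1 then f (a+b) else f (a+2*b) := by
    intro i; rw [hx i]; split_ifs <;> rfl
  simp_rw [h1]
  rw [Fin.sum_univ_eq_sum_range (fun i => if i < k-1 then f a else if i = k-1 then f (a+b) else f (a+2*b)) (2*k)]
  rw [Finset.range_eq_Ico,
    ← Finset.sum_Ico_consecutive _ (Nat.zero_le k) (by omega : k ≤ 2*k),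
    ← Finset.sum_Ico_consecutive _ (Nat.zero_le (k-1)) (by omega : k-1 ≤ k)]
  have e1 : ∑ i ∈ Finset.Ico 0 (k-1), (if i < k-1 then f a else if i = k-1 then f (a+b) else f (a+2*b)) = ((k:ℝ)-1) * f a := by
    have hcon : ∀ i ∈ Finset.Ico 0 (k-1), (if i < k-1 then f a else if i = k-1 then f (a+b) else f (a+2*b)) = f a := by
      intro i hi; rw [Finset.mem_Ico] at hi; rw [if_pos hi.2]
    rw [Finset.sum_congr rfl hcon, Finset.sum_const, Nat.card_Ico, nsmul_eq_mul]
    congr 1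
    rw [Nat.sub_zero, Nat.cast_sub hk]; push_cast; ring
  have e2 : ∑ i ∈ Finset.Ico (k-1) k, (if i < k-1 then f a else if i = k-1 then f (a+b) else f (a+2*b)) = f (a+b) := by
    have hs : Finset.Ico (k-1) k = {k-1} := by
      ext i; simp only [Finset.mem_Ico, Finset.mem_singleton]; omega
    rw [hs, Finset.sum_singleton, if_neg (lt_irrefl _), if_pos rfl]
  have e3 : ∑ i ∈ Finset.Ico k (2*k), (if i < k-1 then f a else if i = k-1 then f (a+b) else f (a+2*b)) = (k:ℝ) * f (a+2*b) := by
    have hcon : ∀ i ∈ Finset.Ico k (2*k), (if i < k-1 then f a else if i = k-1 then f (a+b) else f (a+2*b)) = f (a+2*b) := by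
      intro i hi; rw [Finset.mem_Ico] at hi
      rw [if_neg (by omega), if_neg (by omega)]
    rw [Finset.sum_congr rfl hcon, Finset.sum_const, Nat.card_Ico, nsmul_eq_mul]
    congr 1
    rw [show 2*k - k = k from by omega]
  rw [e1, e2, e3]

theorem stmt_9 (b c a : ℝ) (hb : 0 < b) (hc : 0 < c) (k : ℕ) (hk : 1 ≤ k)
    (x : Fin (2 * k) → ℝ)
    (hx : ∀ i : Fin (2 * k),
      x i = if (i : ℕ) < k - 1 then a else if (i : ℕ) = k - 1 then a + b else a + 2 * b) :
    -- the optimal social cost equals n·c + b  (the median is x_k = a + b, with peaks a, a + 2b)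
    IsLeast (Set.range fun y => ∑ i, cost b c y (x i)) ((2 * k : ℝ) * c + b) ∧
    -- the expected social cost of the median-peaks mechanism equals n·c + (n-1)·b
    (1 / 2) * (∑ i, cost b c a (x i)) + (1 / 2) * (∑ i, cost b c (a + 2 * b) (x i))
      = (2 * k : ℝ) * c + ((2 * k : ℝ) - 1) * b ∧
    -- the ratio (n·c + (n-1)·b)/(n·c + b) tends to 1 + b/c as n → ∞
    Filter.Tendsto
      (fun n : ℕ => ((n : ℝ) * c + ((n : ℝ) - 1) * b) / ((n : ℝ) * c + b))
      Filter.atTop (nhds (1 + b / c)) := by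
  have hk1 : (1:ℝ) ≤ (k:ℝ) := by exact_mod_cast hk
  have hsum : ∀ y : ℝ, ∑ i, cost b c y (x i)
      = ((k:ℝ)-1) * cost b c y a + cost b c y (a+b) + (k:ℝ) * cost b c y (a+2*b) :=
    fun y => sum_eval a b k hk x hx (cost b c y)
  refine ⟨⟨?_, ?_⟩, ?_, ?_⟩
  · -- membership: y = a + b achieves 2kc + b
    refine ⟨a + b, ?_⟩
    show ∑ i, cost b c (a+b) (x i) = 2 * (k:ℝ) * c + b
    rw [hsum (a+b)]
    simp only [cost]
    rw [show a - b - (a+b) = -(2*b) by ring, show a + b - (a+b) = 0 by ring,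
        show a + b - b - (a+b) = -b by ring, show a + b + b - (a+b) = b by ring,
        show a + 2*b - b - (a+b) = 0 by ring, show a + 2*b + b - (a+b) = 2*b by ring]
    simp only [abs_neg, abs_zero]
    rw [abs_of_pos hb, abs_of_pos (by linarith : (0:ℝ) < 2*b)]
    rw [min_eq_right (by linarith : (0:ℝ) ≤ 2*b), min_self, min_eq_left (by linarith : (0:ℝ) ≤ 2*b)]
    ring
  · -- lower bound
    rintro v ⟨y, rfl⟩
    show 2 * (k:ℝ) * c + b ≤ ∑ i, cost b c y (x i)
    rw [hsum y]
    simp only [cost]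
    have g1nn : (0:ℝ) ≤ min |a - b - y| |a + b - y| := le_min (abs_nonneg _) (abs_nonneg _)
    have g3nn : (0:ℝ) ≤ min |a + 2*b - b - y| |a + 2*b + b - y| := le_min (abs_nonneg _) (abs_nonneg _)
    have key : min |a + b - b - y| |a + b + b - y| + min |a + 2*b - b - y| |a + 2*b + b - y| ≥ b := by
      rcases min_cases |a + b - b - y| |a + b + b - y| with ⟨h2, _⟩ | ⟨h2, _⟩ <;>
      rcases min_cases |a + 2*b - b - y| |a + 2*b + b - y| with ⟨h3, _⟩ | ⟨h3, _⟩ <;>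
      rw [h2, h3] <;>
      [ linarith [neg_abs_le (a + b - b - y), le_abs_self (a + 2*b - b - y)];
        linarith [neg_abs_le (a + b - b - y), le_abs_self (a + 2*b + b - y)];
        linarith [le_abs_self (a + b + b - y), neg_abs_le (a + 2*b - b - y), abs_nonneg (a + b + b - y), abs_nonneg (a + 2*b - b - y)];
        linarith [neg_abs_le (a + b + b - y), le_abs_self (a + 2*b + b - y)] ]
    nlinarith [g1nn, g3nn, key, hk1]
  · -- expected cost
    rw [hsum a, hsum (a + 2*b)]
    simp only [cost]
    rw [show a - b - a = -b by ring, show a + b - a = b by ring,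
        show a + b - b - a = 0 by ring, show a + b + b - a = 2*b by ring,
        show a + 2*b - b - a = b by ring, show a + 2*b + b - a = 3*b by ring,
        show a - b - (a + 2*b) = -(3*b) by ring, show a + b - (a + 2*b) = -b by ring,
        show a + b - b - (a + 2*b) = -(2*b) by ring, show a + b + b - (a + 2*b) = 0 by ring,
        show a + 2*b - b - (a + 2*b) = -b by ring, show a + 2*b + b - (a + 2*b) = b by ring]
    simp only [abs_neg, abs_zero]
    rw [abs_of_pos hb, abs_of_pos (by linarith : (0:ℝ) < 2*b), abs_of_pos (by linarith : (0:ℝ) < 3*b)]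
    rw [min_self, min_eq_left (by linarith : (0:ℝ) ≤ 2*b), min_eq_left (by linarith : b ≤ 3*b),
        min_eq_right (by linarith : b ≤ 3*b), min_eq_right (by linarith : (0:ℝ) ≤ 2*b)]
    ring
  · -- limit
    have hEq : ∀ᶠ n : ℕ in Filter.atTop,
        ((n : ℝ) * c + ((n : ℝ) - 1) * b) / ((n : ℝ) * c + b)
          = (c + b - b / n) / (c + b / n) := by
      filter_upwards [Filter.eventually_ge_atTop 1] with n hn
      have hn' : (0:ℝ) < (n:ℝ) := by exact_mod_cast hn
      have hd : (0:ℝ) < (n:ℝ) * c + b := by positivity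
      have hd2 : (0:ℝ) < c + b / n := by positivity
      rw [div_eq_div_iff hd.ne' hd2.ne']
      field_simp
      ring
    rw [Filter.tendsto_congr' hEq]
    have hnum : Filter.Tendsto (fun n : ℕ => c + b - b / (n:ℝ)) Filter.atTop (nhds (c + b - 0)) :=
      Filter.Tendsto.sub tendsto_const_nhds (tendsto_const_div_atTop_nhds_zero_nat b)
    have hden : Filter.Tendsto (fun n : ℕ => c + b / (n:ℝ)) Filter.atTop (nhds (c + 0)) :=
      Filter.Tendsto.add tendsto_const_nhds (tendsto_const_div_atTop_nhds_zero_nat b)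
    have := hnum.div hden (by simpa using hc.ne')
    simp only [sub_zero, add_zero] at this
    convert this using 2
    · rfl
    · rw [add_div, div_self hc.ne']
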